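/- The C-algebra Γ := C⟨a,b⟩/(ab+ba, -a²+b³+aba) is nine-dimensional as a C-vector space. -/

import Mathlib

open FreeAlgebra

/-- The relations defining the contraction algebra Γ = C⟨a,b⟩/(ab+ba, -a²+b³+aba),
with a = ι ℂ 0 and b = ι ℂ 1. -/
inductive GamRel : FreeAlgebra ℂ (Fin 2) → FreeAlgebra ℂ (Fin 2) → Prop
  | r1 : GamRel (ι ℂ 0 * ι ℂ 1 + ι ℂ 1 * ι ℂ 0) 0
  | r2 : GamRel (-(ι ℂ 0) ^ 2 + (ι ℂ 1) ^ 3 + ι ℂ 0 * ι ℂ 1 * ι ℂ 0) 0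

namespace GamAux

/-- Integer matrix representing `a` in the left regular representation. -/
def ia : Matrix (Fin 9) (Fin 9) ℤ := Matrix.of fun r c => if (r : ℕ) = (c : ℕ) + 3 then 1 else 0

/-- Integer matrix representing `b` in the left regular representation. -/
def ib : Matrix (Fin 9) (Fin 9) ℤ := !![0,0,0,0,0,0,0,0,0;
  1,0,0,0,0,0,0,0,0;
  0,1,0,0,0,0,0,0,0;
  0,0,0,0,0,0,0,0,0;
  0,0,0,-1,0,0,0,0,0;
  0,0,0,0,-1,0,0,0,0;
  0,0,1,0,0,0,0,0,0;
  0,0,1,0,0,0,1,0,0;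
  0,0,0,0,0,0,0,1,0]

theorem irel1 : ia * ib + ib * ia = 0 := by decide

theorem irel2 : -ia ^ 2 + ib ^ 3 + ia * ib * ia = 0 := by decide

/-- The integer monomial matrices. -/
def iw : Fin 9 → Matrix (Fin 9) (Fin 9) ℤ :=
  ![1, ib, ib ^ 2, ia, ia * ib, ia * ib ^ 2, ia ^ 2, ia ^ 2 * ib, ia ^ 2 * ib ^ 2]

theorem iw0 : iw 0 = 1 := rfl
theorem iw1 : iw 1 = ib := rfl
theorem iw2 : iw 2 = ib ^ 2 := rfl
theorem iw3 : iw 3 = ia := rfl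
theorem iw4 : iw 4 = ia * ib := rfl
theorem iw5 : iw 5 = ia * ib ^ 2 := rfl
theorem iw6 : iw 6 = ia ^ 2 := rfl
theorem iw7 : iw 7 = ia ^ 2 * ib := rfl
theorem iw8 : iw 8 = ia ^ 2 * ib ^ 2 := rfl

theorem icol : ∀ n r : Fin 9, iw n r 0 = if r = n then 1 else 0 := by decide

/-- Coercion ring hom from integer to complex matrices. -/
noncomputable def cm : Matrix (Fin 9) (Fin 9) ℤ →+* Matrix (Fin 9) (Fin 9) ℂ :=
  (Int.castRingHom ℂ).mapMatrix

noncomputable abbrev ca : Matrix (Fin 9) (Fin 9) ℂ := cm ia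
noncomputable abbrev cb : Matrix (Fin 9) (Fin 9) ℂ := cm ib

theorem crel1 : ca * cb + cb * ca = 0 := by
  have h := congrArg cm irel1
  simpa [map_add, map_mul, map_zero] using h

theorem crel2 : -ca ^ 2 + cb ^ 3 + ca * cb * ca = 0 := by
  have h := congrArg cm irel2
  simpa [map_add, map_mul, map_pow, map_neg, map_zero] using h

noncomputable abbrev Gam := RingQuot GamRel

noncomputable def ga : Gam := RingQuot.mkAlgHom ℂ GamRel (ι ℂ 0)
noncomputable def gb : Gam := RingQuot.mkAlgHom ℂ GamRel (ι ℂ 1)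

/- Instance-path-stable rewriting lemmas for `Gam`. -/
theorem gmn (x y : Gam) : x * -y = -(x * y) := mul_neg x y
theorem gnm (x y : Gam) : -x * y = -(x * y) := neg_mul x y
theorem gzm (x : Gam) : 0 * x = 0 := zero_mul x
theorem gom (x : Gam) : 1 * x = x := one_mul x
theorem gaz (x : Gam) : x + 0 = x := add_zero x
theorem gnz : -(0 : Gam) = 0 := neg_zero
theorem gnn (x : Gam) : -(-x) = x := neg_neg x
theorem gsub (x y : Gam) : x - y = x + -y := sub_eq_add_neg x y

theorem h1 : ga * gb + gb * ga = 0 := by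
  have h := RingQuot.mkAlgHom_rel ℂ GamRel.r1
  simpa [ga, gb, map_add, map_mul] using h

theorem h2 : -ga ^ 2 + gb ^ 3 + ga * gb * ga = 0 := by
  have h := RingQuot.mkAlgHom_rel ℂ GamRel.r2
  simpa [ga, gb, map_add, map_mul, map_pow, map_neg] using h

theorem hba : gb * ga = -(ga * gb) := eq_neg_of_add_eq_zero_right h1

theorem haba : ga * gb * ga = -(ga ^ 2 * gb) := by
  rw [mul_assoc, hba, gmn, ← mul_assoc, ← pow_two]

theorem hb3 : gb ^ 3 = ga ^ 2 + ga ^ 2 * gb := by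
  have h := h2
  rw [haba] at h
  have h' : gb ^ 3 - (ga ^ 2 + ga ^ 2 * gb) = 0 := by rw [← h]; abel
  exact sub_eq_zero.mp h'

theorem hb2a : gb ^ 2 * ga = ga * gb ^ 2 := by
  rw [pow_two, mul_assoc, hba, gmn, ← mul_assoc, hba, gnm, gnn, mul_assoc, ← pow_two]

theorem hsplit : gb ^ 2 * gb = ga ^ 2 + ga ^ 2 * gb := by
  rw [← pow_succ]; exact hb3

theorem ha3 : ga ^ 3 = 0 := by
  have e1 : gb ^ 3 * ga = ga ^ 3 - ga ^ 3 * gb := by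
    rw [hb3, add_mul, ← pow_succ, mul_assoc, hba, gmn, ← mul_assoc, ← pow_succ, ← gsub]
  have e2 : gb ^ 3 * ga = -(ga ^ 3 + ga ^ 3 * gb) := by
    have t : gb ^ 3 * ga = gb ^ 2 * (gb * ga) := by rw [← mul_assoc, ← pow_succ]
    rw [t, hba, gmn, ← mul_assoc, hb2a, mul_assoc, hsplit, mul_add, ← mul_assoc, ← pow_succ']
  have e3 : ga ^ 3 + ga ^ 3 = 0 := by
    have h := e1.symm.trans e2
    have h' : ga ^ 3 + ga ^ 3 = (ga ^ 3 - ga ^ 3 * gb) - -(ga ^ 3 + ga ^ 3 * gb) := by abel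
    rw [h', h]
    exact sub_self _
  calc ga ^ 3 = (1 : ℂ) • ga ^ 3 := (one_smul ℂ _).symm
  _ = ((2 : ℂ)⁻¹ + (2 : ℂ)⁻¹) • ga ^ 3 := by norm_num
  _ = (2 : ℂ)⁻¹ • ga ^ 3 + (2 : ℂ)⁻¹ • ga ^ 3 := add_smul _ _ _
  _ = (2 : ℂ)⁻¹ • (ga ^ 3 + ga ^ 3) := (smul_add _ _ _).symm
  _ = (2 : ℂ)⁻¹ • (0 : Gam) := by rw [e3]
  _ = 0 := smul_zero _

theorem hz3 : ga ^ 2 * ga = 0 := by rw [← pow_succ]; exact ha3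

theorem hzz : ga * ga ^ 2 = 0 := by rw [← pow_succ']; exact ha3

theorem ha4 : ga ^ 4 = 0 := by
  rw [show ga ^ 4 = ga ^ 3 * ga from by rw [← pow_succ], ha3, gzm]

theorem hzz2 : ga ^ 2 * ga ^ 2 = 0 := by rw [← pow_add]; exact ha4

theorem hab3 : ga * gb ^ 3 = 0 := by
  rw [hb3, mul_add, ← mul_assoc, hzz, gzm, gaz]

theorem ha2b3 : ga ^ 2 * gb ^ 3 = 0 := by
  rw [hb3, mul_add, ← mul_assoc, hzz2, gzm, gaz]

/-- The spanning monomials. -/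
noncomputable def v : Fin 9 → Gam :=
  ![1, gb, gb ^ 2, ga, ga * gb, ga * gb ^ 2, ga ^ 2, ga ^ 2 * gb, ga ^ 2 * gb ^ 2]

theorem v0 : v 0 = 1 := rfl
theorem v1 : v 1 = gb := rfl
theorem v2 : v 2 = gb ^ 2 := rfl
theorem v3 : v 3 = ga := rfl
theorem v4 : v 4 = ga * gb := rfl
theorem v5 : v 5 = ga * gb ^ 2 := rfl
theorem v6 : v 6 = ga ^ 2 := rfl
theorem v7 : v 7 = ga ^ 2 * gb := rfl
theorem v8 : v 8 = ga ^ 2 * gb ^ 2 := rfl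

noncomputable def S : Submodule ℂ Gam := Submodule.span ℂ (Set.range v)

theorem hv (n : Fin 9) : v n ∈ S := Submodule.subset_span ⟨n, rfl⟩

theorem kb0 : v 0 * gb ∈ S := by
  have e : v 0 * gb = v 1 := by rw [v0, gom, v1]
  rw [e]; exact hv 1
theorem kb1 : v 1 * gb ∈ S := by
  have e : v 1 * gb = v 2 := by rw [v1, v2, ← pow_two]
  rw [e]; exact hv 2
theorem kb2 : v 2 * gb ∈ S := by
  have e : v 2 * gb = v 6 + v 7 := by rw [v2, v6, v7]; exact hsplit
  rw [e]; exact add_mem (hv 6) (hv 7)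
theorem kb3 : v 3 * gb ∈ S := by
  have e : v 3 * gb = v 4 := by rw [v3, v4]
  rw [e]; exact hv 4
theorem kb4 : v 4 * gb ∈ S := by
  have e : v 4 * gb = v 5 := by rw [v4, v5, mul_assoc, ← pow_two]
  rw [e]; exact hv 5
theorem kb5 : v 5 * gb ∈ S := by
  have e : v 5 * gb = 0 := by rw [v5, mul_assoc, ← pow_succ]; exact hab3
  rw [e]; exact zero_mem S
theorem kb6 : v 6 * gb ∈ S := by
  have e : v 6 * gb = v 7 := by rw [v6, v7]
  rw [e]; exact hv 7
theorem kb7 : v 7 * gb ∈ S := by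
  have e : v 7 * gb = v 8 := by rw [v7, v8, mul_assoc, ← pow_two]
  rw [e]; exact hv 8
theorem kb8 : v 8 * gb ∈ S := by
  have e : v 8 * gb = 0 := by rw [v8, mul_assoc, ← pow_succ]; exact ha2b3
  rw [e]; exact zero_mem S

theorem ka0 : v 0 * ga ∈ S := by
  have e : v 0 * ga = v 3 := by rw [v0, gom, v3]
  rw [e]; exact hv 3
theorem ka1 : v 1 * ga ∈ S := by
  have e : v 1 * ga = -(v 4) := by rw [v1, v4]; exact hba
  rw [e]; exact neg_mem (hv 4)
theorem ka2 : v 2 * ga ∈ S := by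
  have e : v 2 * ga = v 5 := by rw [v2, v5]; exact hb2a
  rw [e]; exact hv 5
theorem ka3 : v 3 * ga ∈ S := by
  have e : v 3 * ga = v 6 := by rw [v3, v6, ← pow_two]
  rw [e]; exact hv 6
theorem ka4 : v 4 * ga ∈ S := by
  have e : v 4 * ga = -(v 7) := by rw [v4, v7]; exact haba
  rw [e]; exact neg_mem (hv 7)
theorem ka5 : v 5 * ga ∈ S := by
  have e : v 5 * ga = v 8 := by rw [v5, v8, mul_assoc, hb2a, ← mul_assoc, ← pow_two]
  rw [e]; exact hv 8
theorem ka6 : v 6 * ga ∈ S := by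
  have e : v 6 * ga = 0 := by rw [v6]; exact hz3
  rw [e]; exact zero_mem S
theorem ka7 : v 7 * ga ∈ S := by
  have e : v 7 * ga = 0 := by
    rw [v7, mul_assoc, hba, gmn, ← mul_assoc, hz3, gzm, gnz]
  rw [e]; exact zero_mem S
theorem ka8 : v 8 * ga ∈ S := by
  have e : v 8 * ga = 0 := by rw [v8, mul_assoc, hb2a, ← mul_assoc, hz3, gzm]
  rw [e]; exact zero_mem S

theorem kb : ∀ n : Fin 9, v n * gb ∈ S := by
  intro n; fin_cases n
  exacts [kb0, kb1, kb2, kb3, kb4, kb5, kb6, kb7, kb8]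

theorem ka : ∀ n : Fin 9, v n * ga ∈ S := by
  intro n; fin_cases n
  exacts [ka0, ka1, ka2, ka3, ka4, ka5, ka6, ka7, ka8]

theorem mul_ga_mem : ∀ s ∈ S, s * ga ∈ S := by
  intro s hs
  induction hs using Submodule.span_induction with
  | mem x hx => obtain ⟨n, rfl⟩ := hx; exact ka n
  | zero => rw [gzm]; exact zero_mem S
  | add x y _ _ hx hy => rw [add_mul]; exact add_mem hx hy
  | smul c x _ hx => rw [smul_mul_assoc]; exact Submodule.smul_mem S c hx

theorem mul_gb_mem : ∀ s ∈ S, s * gb ∈ S := by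
  intro s hs
  induction hs using Submodule.span_induction with
  | mem x hx => obtain ⟨n, rfl⟩ := hx; exact kb n
  | zero => rw [gzm]; exact zero_mem S
  | add x y _ _ hx hy => rw [add_mul]; exact add_mem hx hy
  | smul c x _ hx => rw [smul_mul_assoc]; exact Submodule.smul_mem S c hx

theorem span_top : (⊤ : Submodule ℂ Gam) ≤ S := by
  intro t _
  obtain ⟨y, rfl⟩ := RingQuot.mkAlgHom_surjective ℂ GamRel t
  have main : ∀ y : FreeAlgebra ℂ (Fin 2), ∀ s ∈ S,
      s * RingQuot.mkAlgHom ℂ GamRel y ∈ S := by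
    intro y
    induction y using FreeAlgebra.induction with
    | grade0 r =>
      intro s hs
      rw [AlgHom.commutes, ← Algebra.commutes, ← Algebra.smul_def]
      exact Submodule.smul_mem S r hs
    | grade1 i =>
      intro s hs
      fin_cases i
      · exact mul_ga_mem s hs
      · exact mul_gb_mem s hs
    | mul x y hx hy =>
      intro s hs
      rw [map_mul, ← mul_assoc]
      exact hy _ (hx s hs)
    | add x y hx hy =>
      intro s hs
      rw [map_add, mul_add]
      exact add_mem (hx s hs) (hy s hs)
  have h1S : (1 : Gam) ∈ S := by rw [← v0]; exact hv 0
  have := main y 1 h1S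
  simpa using this

/-- The representation of `Gam` on 9×9 complex matrices. -/
noncomputable def ψ : Gam →ₐ[ℂ] Matrix (Fin 9) (Fin 9) ℂ :=
  RingQuot.liftAlgHom ℂ ⟨FreeAlgebra.lift ℂ ![ca, cb], by
    intro x y h
    cases h with
    | r1 =>
      simp only [map_add, map_mul, map_zero, FreeAlgebra.lift_ι_apply, Matrix.cons_val_zero,
        Matrix.cons_val_one, Matrix.head_cons]
      exact crel1
    | r2 =>
      simp only [map_add, map_mul, map_zero, map_neg, map_pow, FreeAlgebra.lift_ι_apply,
        Matrix.cons_val_zero, Matrix.cons_val_one, Matrix.head_cons]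
      exact crel2⟩

theorem ψa : ψ ga = ca := by
  rw [ga, ψ, RingQuot.liftAlgHom_mkAlgHom_apply]
  simp

theorem ψb : ψ gb = cb := by
  rw [gb, ψ, RingQuot.liftAlgHom_mkAlgHom_apply]
  simp

theorem ψv0 : ψ (v 0) = cm (iw 0) := by rw [v0, iw0, map_one, map_one]
theorem ψv1 : ψ (v 1) = cm (iw 1) := by rw [v1, iw1, ψb]
theorem ψv2 : ψ (v 2) = cm (iw 2) := by rw [v2, iw2, map_pow, map_pow, ψb]
theorem ψv3 : ψ (v 3) = cm (iw 3) := by rw [v3, iw3, ψa]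
theorem ψv4 : ψ (v 4) = cm (iw 4) := by rw [v4, iw4, map_mul, map_mul, ψa, ψb]
theorem ψv5 : ψ (v 5) = cm (iw 5) := by
  rw [v5, iw5, map_mul, map_mul, map_pow, map_pow, ψa, ψb]
theorem ψv6 : ψ (v 6) = cm (iw 6) := by rw [v6, iw6, map_pow, map_pow, ψa]
theorem ψv7 : ψ (v 7) = cm (iw 7) := by
  rw [v7, iw7, map_mul, map_mul, map_pow, map_pow, ψa, ψb]
theorem ψv8 : ψ (v 8) = cm (iw 8) := by
  rw [v8, iw8, map_mul, map_mul, map_pow, map_pow, map_pow, map_pow, ψa, ψb]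

theorem ψv : ∀ n : Fin 9, ψ (v n) = cm (iw n) := by
  intro n; fin_cases n
  exacts [ψv0, ψv1, ψv2, ψv3, ψv4, ψv5, ψv6, ψv7, ψv8]

/-- Linear evaluation sending `x` to the first column of `ψ x`. -/
noncomputable def F : Gam →ₗ[ℂ] (Fin 9 → ℂ) where
  toFun x := fun r => ψ x r 0
  map_add' x y := by funext r; simp [map_add]
  map_smul' c x := by funext r; simp [map_smul]

theorem hFv (n : Fin 9) : F (v n) = Pi.single n (1 : ℂ) := by
  funext r
  have hF : F (v n) r = ψ (v n) r 0 := rfl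
  have hc : cm (iw n) r 0 = ((iw n r 0 : ℤ) : ℂ) := rfl
  have hs : (Pi.single n (1 : ℂ) : Fin 9 → ℂ) r = if r = n then 1 else 0 :=
    Pi.single_apply n 1 r
  rw [hF, ψv n, hc, icol n r, hs]
  split <;> simp

theorem hsingle : LinearIndependent ℂ (fun n : Fin 9 => Pi.single n (1 : ℂ)) := by
  rw [Fintype.linearIndependent_iff]
  intro g hg n
  have h := congrFun hg n
  simpa [Finset.sum_apply, Pi.single_apply, Finset.sum_ite_eq, mul_ite] using h

theorem hli : LinearIndependent ℂ v := by
  apply LinearIndependent.of_comp F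
  have h : (⇑F ∘ v) = fun n : Fin 9 => Pi.single n (1 : ℂ) := funext fun n => hFv n
  rw [h]
  exact hsingle

/-- The nine monomials form a basis of `Gam`. -/
noncomputable def bas : Module.Basis (Fin 9) ℂ Gam := Module.Basis.mk hli span_top

end GamAux

theorem stmt2 :
    Module.finrank ℂ (RingQuot GamRel) = 9 := by
  rw [Module.finrank_eq_card_basis GamAux.bas, Fintype.card_fin]
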